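/- Let q : Y → S be a continuous map admitting a section e : S → Y together with a fiberwise homotopy h : Y × [0,1] → Y over S from e ∘ q to id_Y. Then for sheaves of spectra, the pullback functor q* : Sh(S; Sp) → Sh(Y; Sp) is fully faithful, and the counit/unit give an isomorphism q_* q* ≅ s* q* for any section s of q. In particular the unit map id → q_* q* evaluated on the unit sheaf is inverse to the map induced by any section. -/

import Mathlib

open CategoryTheory
open Functor

namespace Stmt19Aux

variable {C : Type*} {D : Type*} {E : Type*} {B : Type*}
  [Category C] [Category D] [Category E] [Category B]

theorem adj_ext {L : C ⥤ D} {R : D ⥤ C} {a b : L ⊣ R}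
    (hu : a.unit = b.unit) (hc : a.counit = b.counit) : a = b := by
  cases a; cases b; cases hu; cases hc; rfl

theorem comp_id_adj {L : C ⥤ D} {R : D ⥤ C} (a : L ⊣ R) :
    a.comp (Adjunction.id (C := D)) = a := by
  apply adj_ext <;> ext x <;> simp [Adjunction.id]

theorem id_comp_adj {L : C ⥤ D} {R : D ⥤ C} (a : L ⊣ R) :
    (Adjunction.id (C := C)).comp a = a := by
  apply adj_ext <;> ext x <;> simp [Adjunction.id]

theorem comp_assoc_adj {L1 : C ⥤ D} {R1 : D ⥤ C} (a1 : L1 ⊣ R1)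
    {L2 : D ⥤ E} {R2 : E ⥤ D} (a2 : L2 ⊣ R2)
    {L3 : E ⥤ B} {R3 : B ⥤ E} (a3 : L3 ⊣ R3) :
    (a1.comp a2).comp a3 = a1.comp (a2.comp a3) := by
  apply adj_ext <;> ext x <;> simp

theorem whiskerLeft_eqToHom (F : C ⥤ D) {G H : D ⥤ E} (h : G = H) :
    whiskerLeft F (eqToHom h) = eqToHom (by rw [h]) := by subst h; simp

theorem whiskerRight_eqToHom {G H : C ⥤ D} (h : G = H) (F : D ⥤ E) :
    whiskerRight (eqToHom h) F = eqToHom (by rw [h]) := by subst h; simp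

theorem conj_symm_whiskerRight
    {L₁ L₂ : C ⥤ D} {R₁ R₂ : D ⥤ C} (adj₁ : L₁ ⊣ R₁) (adj₂ : L₂ ⊣ R₂)
    {L₃ : D ⥤ E} {R₃ : E ⥤ D} (adj₃ : L₃ ⊣ R₃) (α : R₁ ⟶ R₂) :
    whiskerRight ((conjugateEquiv adj₁ adj₂).symm α) L₃ =
      (conjugateEquiv (adj₁.comp adj₃) (adj₂.comp adj₃)).symm (whiskerLeft R₃ α) := by
  ext X
  simp only [whiskerRight_app, whiskerLeft_app, conjugateEquiv_symm_apply_app,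
    Adjunction.comp_unit_app, Adjunction.comp_counit_app, Functor.comp_map, Functor.comp_obj,
    Functor.map_comp, Category.assoc, Functor.id_obj]
  congr 1
  rw [← Functor.map_comp_assoc, ← L₂.map_comp, α.naturality, L₂.map_comp, Functor.map_comp,
    Category.assoc, ← Functor.map_comp_assoc L₃ (L₂.map (R₂.map _)), adj₂.counit_naturality,
    Functor.map_comp, Category.assoc, adj₃.left_triangle_components]
  simp

theorem conj_symm_whiskerLeft
    {L₀ : B ⥤ C} {R₀ : C ⥤ B} (adj₀ : L₀ ⊣ R₀)
    {L₁ L₂ : C ⥤ D} {R₁ R₂ : D ⥤ C} (adj₁ : L₁ ⊣ R₁) (adj₂ : L₂ ⊣ R₂)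
    (α : R₁ ⟶ R₂) :
    whiskerLeft L₀ ((conjugateEquiv adj₁ adj₂).symm α) =
      (conjugateEquiv (adj₀.comp adj₁) (adj₀.comp adj₂)).symm (whiskerRight α R₀) := by
  ext X
  simp only [whiskerRight_app, whiskerLeft_app, conjugateEquiv_symm_apply_app,
    Adjunction.comp_unit_app, Adjunction.comp_counit_app, Functor.comp_map, Functor.comp_obj,
    Functor.map_comp, Category.assoc, Functor.id_obj]
  have hnat := adj₀.counit_naturality (adj₁.unit.app (L₀.obj X))
  simp only [Functor.comp_obj, Functor.id_obj] at hnat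
  rw [← L₂.map_comp_assoc (L₀.map (R₀.map (α.app _))), adj₀.counit_naturality,
    L₂.map_comp, Category.assoc,
    ← L₂.map_comp_assoc (L₀.map (R₀.map (adj₁.unit.app _))),
    hnat,
    L₂.map_comp, Category.assoc,
    ← L₂.map_comp_assoc (L₀.map (adj₀.unit.app X)) (adj₀.counit.app (L₀.obj X))]
  simp

theorem conj_symm_eqToHom₃ {L₁ L₂ L₃ L₄ : C ⥤ D} {R₁ R₂ R₃ R₄ : D ⥤ C}
    (adj₁ : L₁ ⊣ R₁) (adj₂ : L₂ ⊣ R₂) (adj₃ : L₃ ⊣ R₃) (adj₄ : L₄ ⊣ R₄)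
    (h12 : R₁ = R₂) (h23 : R₂ = R₃) (h34 : R₃ = R₄) (h14 : R₁ = R₄) :
    (conjugateEquiv adj₃ adj₄).symm (eqToHom h34) ≫
      (conjugateEquiv adj₂ adj₃).symm (eqToHom h23) ≫
      (conjugateEquiv adj₁ adj₂).symm (eqToHom h12) =
    (conjugateEquiv adj₁ adj₄).symm (eqToHom h14) := by
  rw [conjugateEquiv_symm_comp, conjugateEquiv_symm_comp, eqToHom_trans, eqToHom_trans]

section Chase

variable {Fq : C ⥤ D} {Uq : D ⥤ C} (adjq : Fq ⊣ Uq)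
variable {FP FH : D ⥤ E} {UP UH : E ⥤ D} (adjP : FP ⊣ UP) (adjH : FH ⊣ UH)
variable (hPq : UP ⋙ Uq = UH ⋙ Uq)
variable {Fit : E ⥤ D} {Uit : D ⥤ E} (adjit : Fit ⊣ Uit)
variable {FW : D ⥤ D} {UW : D ⥤ D} (adjW : FW ⊣ UW)
variable (hUP : Uit ⋙ UP = 𝟭 D) (hUH : Uit ⋙ UH = UW)

theorem chase_left (EW : UW ⋙ Uq = Uq) :
    whiskerLeft Fq ((conjugateEquiv (adjP.comp adjit) (Adjunction.id (C := D))).symm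
        (eqToHom hUP)) ≫
      whiskerRight ((conjugateEquiv (adjq.comp adjH) (adjq.comp adjP)).symm
        (eqToHom hPq.symm)) Fit ≫
      whiskerLeft Fq ((conjugateEquiv adjW (adjH.comp adjit)).symm (eqToHom hUH.symm)) =
    (conjugateEquiv (adjq.comp adjW) adjq).symm (eqToHom EW) := by
  rw [conj_symm_whiskerLeft adjq (adjP.comp adjit) (Adjunction.id (C := D)) (eqToHom hUP),
    conj_symm_whiskerRight (adjq.comp adjH) (adjq.comp adjP) adjit (eqToHom hPq.symm),
    conj_symm_whiskerLeft adjq adjW (adjH.comp adjit) (eqToHom hUH.symm),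
    comp_assoc_adj adjq adjP adjit, comp_assoc_adj adjq adjH adjit,
    whiskerRight_eqToHom _ Uq, whiskerLeft_eqToHom Uit, whiskerRight_eqToHom _ Uq,
    comp_id_adj adjq]
  exact conj_symm_eqToHom₃ (adjq.comp adjW) (adjq.comp (adjH.comp adjit))
    (adjq.comp (adjP.comp adjit)) adjq
    (by rw [hUH]) (by rw [Functor.assoc, Functor.assoc, hPq]) (by rw [hUP, Functor.id_comp]) EW

theorem chase_right (EW : UW ⋙ Uq = Uq) :
    whiskerLeft Fq ((conjugateEquiv (adjH.comp adjit) adjW).symm (eqToHom hUH)) ≫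
      whiskerRight ((conjugateEquiv (adjq.comp adjP) (adjq.comp adjH)).symm
        (eqToHom hPq)) Fit ≫
      whiskerLeft Fq ((conjugateEquiv (Adjunction.id (C := D)) (adjP.comp adjit)).symm
        (eqToHom hUP.symm)) =
    (conjugateEquiv adjq (adjq.comp adjW)).symm (eqToHom EW.symm) := by
  rw [conj_symm_whiskerLeft adjq (adjH.comp adjit) adjW (eqToHom hUH),
    conj_symm_whiskerRight (adjq.comp adjP) (adjq.comp adjH) adjit (eqToHom hPq),
    conj_symm_whiskerLeft adjq (Adjunction.id (C := D)) (adjP.comp adjit) (eqToHom hUP.symm),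
    comp_assoc_adj adjq adjP adjit, comp_assoc_adj adjq adjH adjit,
    whiskerRight_eqToHom _ Uq, whiskerLeft_eqToHom Uit, whiskerRight_eqToHom _ Uq,
    comp_id_adj adjq]
  exact conj_symm_eqToHom₃ adjq (adjq.comp (adjP.comp adjit))
    (adjq.comp (adjH.comp adjit)) (adjq.comp adjW)
    (by rw [hUP, Functor.id_comp]) (by rw [Functor.assoc, Functor.assoc, hPq]) (by rw [hUH]) EW.symm


theorem step {Fq : C ⥤ D} {Uq : D ⥤ C} (adjq : Fq ⊣ Uq)
    {FP FH : D ⥤ E} {UP UH : E ⥤ D} (adjP : FP ⊣ UP) (adjH : FH ⊣ UH)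
    (hPq : UP ⋙ Uq = UH ⋙ Uq)
    {Fit : E ⥤ D} {Uit : D ⥤ E} (adjit : Fit ⊣ Uit)
    {FW : D ⥤ D} {UW : D ⥤ D} (adjW : FW ⊣ UW)
    (hUP : Uit ⋙ UP = 𝟭 D) (hUH : Uit ⋙ UH = UW) (EW : UW ⋙ Uq = Uq)
    {A B : C} (φ : Fq.obj A ⟶ Fq.obj B) (ψ : Fq.obj A ⟶ Fq.obj B)
    (hm : FP.map ψ = ((conjugateEquiv (adjq.comp adjH) (adjq.comp adjP)).symm (eqToHom hPq.symm)).app A ≫ FH.map φ ≫ ((conjugateEquiv (adjq.comp adjP) (adjq.comp adjH)).symm (eqToHom hPq)).app B) :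
    ψ = ((conjugateEquiv (adjq.comp adjW) adjq).symm (eqToHom EW)).app A ≫ FW.map φ ≫ ((conjugateEquiv adjq (adjq.comp adjW)).symm (eqToHom EW.symm)).app B := by
  have hK := congr_app (chase_left adjq adjP adjH hPq adjit adjW hUP hUH EW) A
  have hK' := congr_app (chase_right adjq adjP adjH hPq adjit adjW hUP hUH EW) B
  simp only [NatTrans.comp_app, whiskerLeft_app, whiskerRight_app] at hK hK'
  have huu' : ((conjugateEquiv (adjP.comp adjit) (Adjunction.id (C := D))).symm (eqToHom hUP)).app (Fq.obj B) ≫ ((conjugateEquiv (Adjunction.id (C := D)) (adjP.comp adjit)).symm (eqToHom hUP.symm)).app (Fq.obj B) = 𝟙 _ := by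
    have h := congr_app (conjugateEquiv_symm_comm (Adjunction.id (C := D))
      (adjP.comp adjit) (show eqToHom hUP.symm ≫ eqToHom hUP = 𝟙 _ by simp)) (Fq.obj B)
    simp only [NatTrans.comp_app, NatTrans.id_app, Functor.id_obj, Functor.comp_obj] at h ⊢
    exact h
  have hww' : ((conjugateEquiv adjW (adjH.comp adjit)).symm (eqToHom hUH.symm)).app (Fq.obj B) ≫ ((conjugateEquiv (adjH.comp adjit) adjW).symm (eqToHom hUH)).app (Fq.obj B) = 𝟙 _ := by
    have h := congr_app (conjugateEquiv_symm_comm (adjH.comp adjit) adjW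
      (show eqToHom hUH ≫ eqToHom hUH.symm = 𝟙 _ by simp)) (Fq.obj B)
    simp only [NatTrans.comp_app, NatTrans.id_app, Functor.id_obj, Functor.comp_obj] at h ⊢
    exact h
  have hn1 : ψ ≫ ((conjugateEquiv (adjP.comp adjit) (Adjunction.id (C := D))).symm (eqToHom hUP)).app (Fq.obj B) = ((conjugateEquiv (adjP.comp adjit) (Adjunction.id (C := D))).symm (eqToHom hUP)).app (Fq.obj A) ≫ (FP ⋙ Fit).map ψ := by
    simpa using ((conjugateEquiv (adjP.comp adjit) (Adjunction.id (C := D))).symm (eqToHom hUP)).naturality ψ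
  have hn2 : (FH ⋙ Fit).map φ ≫ ((conjugateEquiv adjW (adjH.comp adjit)).symm (eqToHom hUH.symm)).app (Fq.obj B) = ((conjugateEquiv adjW (adjH.comp adjit)).symm (eqToHom hUH.symm)).app (Fq.obj A) ≫ FW.map φ :=
    ((conjugateEquiv adjW (adjH.comp adjit)).symm (eqToHom hUH.symm)).naturality φ
  simp only [Functor.comp_map] at hn2
  have hmid : Fit.map (FH.map φ) = ((conjugateEquiv adjW (adjH.comp adjit)).symm (eqToHom hUH.symm)).app (Fq.obj A) ≫ FW.map φ ≫ ((conjugateEquiv (adjH.comp adjit) adjW).symm (eqToHom hUH)).app (Fq.obj B) := by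
    rw [← Category.assoc, ← hn2, Category.assoc, hww', Category.comp_id]
  calc ψ = (ψ ≫ ((conjugateEquiv (adjP.comp adjit) (Adjunction.id (C := D))).symm (eqToHom hUP)).app (Fq.obj B)) ≫ ((conjugateEquiv (Adjunction.id (C := D)) (adjP.comp adjit)).symm (eqToHom hUP.symm)).app (Fq.obj B) := by
        rw [Category.assoc, huu']; simp
    _ = ((conjugateEquiv (adjP.comp adjit) (Adjunction.id (C := D))).symm (eqToHom hUP)).app (Fq.obj A) ≫ Fit.map (FP.map ψ) ≫ ((conjugateEquiv (Adjunction.id (C := D)) (adjP.comp adjit)).symm (eqToHom hUP.symm)).app (Fq.obj B) := by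
        rw [hn1]; simp only [Functor.comp_map, Category.assoc]
    _ = ((conjugateEquiv (adjP.comp adjit) (Adjunction.id (C := D))).symm (eqToHom hUP)).app (Fq.obj A) ≫ Fit.map (((conjugateEquiv (adjq.comp adjH) (adjq.comp adjP)).symm (eqToHom hPq.symm)).app A) ≫ Fit.map (FH.map φ)
          ≫ Fit.map (((conjugateEquiv (adjq.comp adjP) (adjq.comp adjH)).symm (eqToHom hPq)).app B) ≫ ((conjugateEquiv (Adjunction.id (C := D)) (adjP.comp adjit)).symm (eqToHom hUP.symm)).app (Fq.obj B) := by
        rw [hm]; simp only [Functor.map_comp, Category.assoc]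
    _ = (((conjugateEquiv (adjP.comp adjit) (Adjunction.id (C := D))).symm (eqToHom hUP)).app (Fq.obj A) ≫ Fit.map (((conjugateEquiv (adjq.comp adjH) (adjq.comp adjP)).symm (eqToHom hPq.symm)).app A) ≫ ((conjugateEquiv adjW (adjH.comp adjit)).symm (eqToHom hUH.symm)).app (Fq.obj A)) ≫ FW.map φ ≫
          (((conjugateEquiv (adjH.comp adjit) adjW).symm (eqToHom hUH)).app (Fq.obj B) ≫ Fit.map (((conjugateEquiv (adjq.comp adjP) (adjq.comp adjH)).symm (eqToHom hPq)).app B) ≫ ((conjugateEquiv (Adjunction.id (C := D)) (adjP.comp adjit)).symm (eqToHom hUP.symm)).app (Fq.obj B)) := by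
        rw [hmid]; simp only [Category.assoc]
    _ = ((conjugateEquiv (adjq.comp adjW) adjq).symm (eqToHom EW)).app A ≫ FW.map φ ≫ ((conjugateEquiv adjq (adjq.comp adjW)).symm (eqToHom EW.symm)).app B := by rw [hK, hK']


theorem key {Fq : C ⥤ D} {Uq : D ⥤ C} (adjq : Fq ⊣ Uq)
    {Fe : D ⥤ C} {Ue : C ⥤ D} (adje : Fe ⊣ Ue)
    {FP FH : D ⥤ E} {UP UH : E ⥤ D} (adjP : FP ⊣ UP) (adjH : FH ⊣ UH)
    {Fi0 Fi1 : E ⥤ D} {Ui0 Ui1 : D ⥤ E} (adji0 : Fi0 ⊣ Ui0) (adji1 : Fi1 ⊣ Ui1)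
    (hre : Ue ⋙ Uq = 𝟭 C)
    (hPq : UP ⋙ Uq = UH ⋙ Uq)
    (h1H : Ui1 ⋙ UH = 𝟭 D) (h1P : Ui1 ⋙ UP = 𝟭 D)
    (h0H : Ui0 ⋙ UH = Uq ⋙ Ue) (h0P : Ui0 ⋙ UP = 𝟭 D)
    (hfull : FP.Full) : Fq.Full ∧ Fq.Faithful := by
  haveI := hfull
  have E1 : 𝟭 D ⋙ Uq = Uq := Functor.id_comp Uq
  have E2 : (Uq ⋙ Ue) ⋙ Uq = Uq := by rw [Functor.assoc, hre, Functor.comp_id]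
  have hfaith : Fq.Faithful := by
    refine Functor.Faithful.of_comp_iso (G := Fe) (H := 𝟭 C)
      ⟨((conjugateEquiv (Adjunction.id (C := C)) (adjq.comp adje)).symm (eqToHom hre.symm)), ((conjugateEquiv (adjq.comp adje) (Adjunction.id (C := C))).symm (eqToHom hre)), ?_, ?_⟩
    · exact conjugateEquiv_symm_comm (adjq.comp adje) (Adjunction.id (C := C)) (by simp)
    · exact conjugateEquiv_symm_comm (Adjunction.id (C := C)) (adjq.comp adje) (by simp)
  refine ⟨⟨fun {A B} φ => ?_⟩, hfaith⟩
  set ψ : Fq.obj A ⟶ Fq.obj B :=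
    FP.preimage (((conjugateEquiv (adjq.comp adjH) (adjq.comp adjP)).symm (eqToHom hPq.symm)).app A ≫ FH.map φ ≫ ((conjugateEquiv (adjq.comp adjP) (adjq.comp adjH)).symm (eqToHom hPq)).app B) with hψ
  have hm : FP.map ψ = ((conjugateEquiv (adjq.comp adjH) (adjq.comp adjP)).symm (eqToHom hPq.symm)).app A ≫ FH.map φ ≫ ((conjugateEquiv (adjq.comp adjP) (adjq.comp adjH)).symm (eqToHom hPq)).app B := FP.map_preimage _
  have hs1 := step adjq adjP adjH hPq adji1 (Adjunction.id (C := D)) h1P h1H E1 φ ψ hm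
  have hs0 := step adjq adjP adjH hPq adji0 (adje.comp adjq) h0P h0H E2 φ ψ hm
  have hcj1 : (conjugateEquiv (adjq.comp (Adjunction.id (C := D))) adjq).symm (eqToHom E1)
      = 𝟙 Fq := by
    rw [comp_id_adj adjq]
    have h : eqToHom E1 = 𝟙 Uq := rfl
    rw [h]
    exact conjugateEquiv_symm_id adjq
  have hcj1' : (conjugateEquiv adjq (adjq.comp (Adjunction.id (C := D)))).symm (eqToHom E1.symm)
      = 𝟙 Fq := by
    rw [comp_id_adj adjq]
    have h : eqToHom E1.symm = 𝟙 Uq := rfl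
    rw [h]
    exact conjugateEquiv_symm_id adjq
  rw [hcj1, hcj1'] at hs1
  simp only [NatTrans.id_app, Functor.id_map, Category.id_comp, Category.comp_id] at hs1
  -- now hs1 : ψ = φ  (up to defeq identities)
  have hlam : whiskerRight ((conjugateEquiv (adjq.comp adje) (Adjunction.id (C := C))).symm (eqToHom hre)) Fq =
      (conjugateEquiv (adjq.comp (adje.comp adjq)) adjq).symm (eqToHom E2) := by
    rw [conj_symm_whiskerRight (adjq.comp adje) (Adjunction.id (C := C)) adjq (eqToHom hre),
      comp_assoc_adj adjq adje adjq, id_comp_adj adjq, whiskerLeft_eqToHom Uq]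
  have hlam' : whiskerRight ((conjugateEquiv (Adjunction.id (C := C)) (adjq.comp adje)).symm (eqToHom hre.symm)) Fq =
      (conjugateEquiv adjq (adjq.comp (adje.comp adjq))).symm (eqToHom E2.symm) := by
    rw [conj_symm_whiskerRight (Adjunction.id (C := C)) (adjq.comp adje) adjq (eqToHom hre.symm),
      comp_assoc_adj adjq adje adjq, id_comp_adj adjq, whiskerLeft_eqToHom Uq]
  refine ⟨((conjugateEquiv (adjq.comp adje) (Adjunction.id (C := C))).symm (eqToHom hre)).app A ≫ Fe.map φ ≫ ((conjugateEquiv (Adjunction.id (C := C)) (adjq.comp adje)).symm (eqToHom hre.symm)).app B, ?_⟩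
  have : Fq.map (((conjugateEquiv (adjq.comp adje) (Adjunction.id (C := C))).symm (eqToHom hre)).app A ≫ Fe.map φ ≫ ((conjugateEquiv (Adjunction.id (C := C)) (adjq.comp adje)).symm (eqToHom hre.symm)).app B) =
      (whiskerRight ((conjugateEquiv (adjq.comp adje) (Adjunction.id (C := C))).symm (eqToHom hre)) Fq).app A ≫ (Fe ⋙ Fq).map φ ≫ (whiskerRight ((conjugateEquiv (Adjunction.id (C := C)) (adjq.comp adje)).symm (eqToHom hre.symm)) Fq).app B := by
    simp only [Functor.map_comp, whiskerRight_app, Functor.comp_map]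
  rw [this, hlam, hlam', ← hs0, hs1]
  exact Category.comp_id φ

end Chase

end Stmt19Aux


open CategoryTheory TopCat Limits

universe u v

section Stmt19Final

open Stmt19Aux

/-- If `q : Y → S` is a contractible map (it admits a section `e` and a fiberwise
homotopy over `S` from `e ∘ q` to the identity), then — granted homotopy invariance
(`A¹`-invariance) of sheaf theory, which holds for sheaves of spectra — the pullback
functor `q*` on sheaves is fully faithful, the unit `id → q_* q*` is an isomorphism, and
`q_* q* ≅ s* q*` for any section `s` of `q`. -/
theorem stmt_19
    (A : Type v) [Category.{u} A] {FA : A → A → Type*} {CA : A → Type u}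
    [∀ X Y, FunLike (FA X Y) (CA X) (CA Y)] [ConcreteCategory.{u} A FA] [HasColimits A] [HasLimits A]
    [PreservesLimits (CategoryTheory.forget A)]
    [PreservesFilteredColimits (CategoryTheory.forget A)]
    [(CategoryTheory.forget A).ReflectsIsomorphisms]
    -- homotopy invariance: pullback along `pr : T × [0,1] → T` is fully faithful
    (hA1 : ∀ (T : TopCat.{u}) (pr : TopCat.of (↑T × ↑unitInterval) ⟶ T),
      (∀ p : ↑T × ↑unitInterval, pr p = p.1) →
      (TopCat.Sheaf.pullback A pr).Full ∧ (TopCat.Sheaf.pullback A pr).Faithful)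
    (Y S : TopCat.{u}) (q : Y ⟶ S) (e : S ⟶ Y) (he : e ≫ q = 𝟙 S)
    (h : ↑Y × ↑unitInterval → ↑Y) (hc : Continuous h)
    (h0 : ∀ y : ↑Y, h (y, 0) = e (q y))
    (h1 : ∀ y : ↑Y, h (y, 1) = y)
    (hover : ∀ (y : ↑Y) (t : ↑unitInterval), q (h (y, t)) = q y) :
    (TopCat.Sheaf.pullback A q).Full ∧ (TopCat.Sheaf.pullback A q).Faithful ∧
    IsIso ((TopCat.Sheaf.pullbackPushforwardAdjunction A q).unit) ∧
    ∀ s : S ⟶ Y, s ≫ q = 𝟙 S →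
      Nonempty (TopCat.Sheaf.pullback A q ⋙ TopCat.Sheaf.pushforward A q ≅
        TopCat.Sheaf.pullback A q ⋙ TopCat.Sheaf.pullback A s) := by
  let P : TopCat.of (↑Y × ↑unitInterval) ⟶ Y := TopCat.ofHom (ContinuousMap.mk Prod.fst continuous_fst)
  let H : TopCat.of (↑Y × ↑unitInterval) ⟶ Y := TopCat.ofHom (ContinuousMap.mk h hc)
  let i0 : Y ⟶ TopCat.of (↑Y × ↑unitInterval) :=
    TopCat.ofHom (ContinuousMap.mk (fun y => (y, 0)) (continuous_id.prodMk continuous_const))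
  let i1 : Y ⟶ TopCat.of (↑Y × ↑unitInterval) :=
    TopCat.ofHom (ContinuousMap.mk (fun y => (y, 1)) (continuous_id.prodMk continuous_const))
  have hP1 : i1 ≫ P = 𝟙 Y := TopCat.ext fun y => rfl
  have hP0 : i0 ≫ P = 𝟙 Y := TopCat.ext fun y => rfl
  have hH1 : i1 ≫ H = 𝟙 Y := TopCat.ext fun y => h1 y
  have hH0 : i0 ≫ H = q ≫ e := TopCat.ext fun y => h0 y
  have hPHq : P ≫ q = H ≫ q := TopCat.ext fun p => (hover p.1 p.2).symm
  have hre : Sheaf.pushforward A e ⋙ Sheaf.pushforward A q = 𝟭 (S.Sheaf A) := by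
    show Sheaf.pushforward A (e ≫ q) = _
    rw [he]; rfl
  have hPq : Sheaf.pushforward A P ⋙ Sheaf.pushforward A q =
      Sheaf.pushforward A H ⋙ Sheaf.pushforward A q := by
    show Sheaf.pushforward A (P ≫ q) = Sheaf.pushforward A (H ≫ q)
    rw [hPHq]
  have h1H : Sheaf.pushforward A i1 ⋙ Sheaf.pushforward A H = 𝟭 (Y.Sheaf A) := by
    show Sheaf.pushforward A (i1 ≫ H) = _
    rw [hH1]; rfl
  have h1P : Sheaf.pushforward A i1 ⋙ Sheaf.pushforward A P = 𝟭 (Y.Sheaf A) := by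
    show Sheaf.pushforward A (i1 ≫ P) = _
    rw [hP1]; rfl
  have h0P : Sheaf.pushforward A i0 ⋙ Sheaf.pushforward A P = 𝟭 (Y.Sheaf A) := by
    show Sheaf.pushforward A (i0 ≫ P) = _
    rw [hP0]; rfl
  have h0H : Sheaf.pushforward A i0 ⋙ Sheaf.pushforward A H =
      Sheaf.pushforward A q ⋙ Sheaf.pushforward A e := by
    show Sheaf.pushforward A (i0 ≫ H) = Sheaf.pushforward A (q ≫ e)
    rw [hH0]
  have hfullP : (Sheaf.pullback A P).Full := (hA1 Y P (fun p => rfl)).1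
  obtain ⟨hFull, hFaithful⟩ := key (Sheaf.pullbackPushforwardAdjunction A q)
    (Sheaf.pullbackPushforwardAdjunction A e)
    (Sheaf.pullbackPushforwardAdjunction A P)
    (Sheaf.pullbackPushforwardAdjunction A H)
    (Sheaf.pullbackPushforwardAdjunction A i0)
    (Sheaf.pullbackPushforwardAdjunction A i1)
    hre hPq h1H h1P h0H h0P hfullP
  haveI := hFull
  haveI := hFaithful
  refine ⟨hFull, hFaithful, inferInstance, ?_⟩
  intro s hs
  have hsq : Sheaf.pushforward A s ⋙ Sheaf.pushforward A q = 𝟭 (S.Sheaf A) := by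
    show Sheaf.pushforward A (s ≫ q) = _
    rw [hs]; rfl
  exact ⟨(asIso (Sheaf.pullbackPushforwardAdjunction A q).unit).symm ≪≫
    (conjugateIsoEquiv ((Sheaf.pullbackPushforwardAdjunction A q).comp
      (Sheaf.pullbackPushforwardAdjunction A s)) (Adjunction.id (C := S.Sheaf A))).symm
      (eqToIso hsq)⟩

end Stmt19Final
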